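/- Let β : U → ℝ be continuously differentiable and define the Hamiltonian H := p_t + Ψ + (r − r_s/2)·β on U. Let I ⊆ ℝ be an interval containing 0 and let γ = (t, r, θ, φ, p_t, p_r, p_θ, p_φ) : I → U be a differentiable curve solving Hamilton's equations dq^μ/ds = ∂H/∂p_μ and dp_μ/ds = −∂H/∂q^μ (μ ∈ {t,r,θ,φ}), with r(0) = r_s/2. Then for all s ∈ I: r(s) = r_s/2, θ(s) = θ(0), t(s) = t(0) + s, φ(s) = φ(0) + (c/r_s)·s, p_t(s) = p_t(0), p_θ(s) = p_θ(0), and p_φ(s) = p_φ(0). In particular, if additionally p_t(0) + (c/r_s)·p_φ(0) = 0, then γ(s) remains in the double characteristic manifold Σ₂ for all s: the bicharacteristic curves on the extremal horizon orbit at the constant angular velocity c/r_s while only the radial momentum p_r(s) varies. -/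

import Mathlib

noncomputable section

/-- Partial derivative of a function on phase space ℝ⁸ with respect to the i-th variable.
Coordinates: x 0 = t, x 1 = r, x 2 = θ, x 3 = φ, x 4 = p_t, x 5 = p_r, x 6 = p_θ, x 7 = p_φ. -/
def pd (i : Fin 8) (f : (Fin 8 → ℝ) → ℝ) (x : Fin 8 → ℝ) : ℝ :=
  deriv (fun s => f (Function.update x i s)) (x i)

/-- Σ = r² + (r_s²/4)·cos²θ -/
def Sig (rs r th : ℝ) : ℝ := r ^ 2 + rs ^ 2 / 4 * Real.cos th ^ 2

/-- D = r² + r_s²/4 + (r_s·r/Σ)·(r_s²/4)·sin²θ -/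
def Dfun (rs r th : ℝ) : ℝ :=
  r ^ 2 + rs ^ 2 / 4 + rs * r / Sig rs r th * (rs ^ 2 / 4) * Real.sin th ^ 2

/-- Ψ = ((r_s·c/2)·(r_s·r/Σ)/D)·p_φ as a function on phase space. -/
def Psiv (rs c : ℝ) (x : Fin 8 → ℝ) : ℝ :=
  rs * c / 2 * (rs * x 1 / Sig rs (x 1) (x 2)) / Dfun rs (x 1) (x 2) * x 7

/-- The Hamiltonian H = p_t + Ψ + (r − r_s/2)·β. -/
def Ham (rs c : ℝ) (β : (Fin 8 → ℝ) → ℝ) (x : Fin 8 → ℝ) : ℝ :=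
  x 4 + Psiv rs c x + (x 1 - rs / 2) * β x

/-- The Boyer–Lindquist phase-space chart U = {r > 0, sin θ ≠ 0}. -/
def chartU : Set (Fin 8 → ℝ) := {x | 0 < x 1 ∧ Real.sin (x 2) ≠ 0}

lemma isOpen_chartU : IsOpen chartU := by
  have h1 : IsOpen {x : Fin 8 → ℝ | 0 < x 1} :=
    isOpen_lt continuous_const (continuous_apply 1)
  have h2 : IsOpen {x : Fin 8 → ℝ | Real.sin (x 2) ≠ 0} :=
    isOpen_ne_fun (Real.continuous_sin.comp (continuous_apply 2)) continuous_const
  exact h1.inter h2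

lemma sig_horizon (rs th : ℝ) : Sig rs (rs/2) th = rs^2 * (1 + Real.cos th ^ 2) / 4 := by
  unfold Sig; ring

lemma dfun_horizon {rs : ℝ} (hrs : 0 < rs) (th : ℝ) :
    Dfun rs (rs/2) th = rs^2 / (1 + Real.cos th ^ 2) := by
  have h1 : (0:ℝ) < 1 + Real.cos th ^ 2 := by positivity
  have hs : Real.sin th ^ 2 = 1 - Real.cos th ^ 2 := by
    have := Real.sin_sq_add_cos_sq th; linarith
  unfold Dfun
  rw [sig_horizon, hs]
  field_simp
  ring

lemma coeff_horizon {rs : ℝ} (hrs : 0 < rs) (c th : ℝ) :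
    rs * c / 2 * (rs * (rs/2) / Sig rs (rs/2) th) / Dfun rs (rs/2) th = c / rs := by
  have h1 : (0:ℝ) < 1 + Real.cos th ^ 2 := by positivity
  rw [sig_horizon, dfun_horizon hrs]
  field_simp
  ring

lemma psiv_horizon {rs : ℝ} (hrs : 0 < rs) (c : ℝ) (x : Fin 8 → ℝ) (hx1 : x 1 = rs/2) :
    Psiv rs c x = c / rs * x 7 := by
  unfold Psiv
  rw [hx1, coeff_horizon hrs]


section pdlemmas
variable {rs c : ℝ} {β : (Fin 8 → ℝ) → ℝ} {x : Fin 8 → ℝ}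

lemma update_psiv (i : Fin 8) (h1 : i ≠ 1) (h2 : i ≠ 2) (h7 : i ≠ 7) (s : ℝ) :
    Psiv rs c (Function.update x i s) = Psiv rs c x := by
  unfold Psiv
  rw [Function.update_of_ne (Ne.symm h1), Function.update_of_ne (Ne.symm h2),
    Function.update_of_ne (Ne.symm h7)]

lemma pd0_horizon (hx1 : x 1 = rs/2) : pd 0 (Ham rs c β) x = 0 := by
  unfold pd
  have : (fun s => Ham rs c β (Function.update x 0 s)) = fun _ => x 4 + Psiv rs c x := by
    funext s
    unfold Ham
    rw [update_psiv 0 (by decide) (by decide) (by decide),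
      Function.update_of_ne (by decide : (4:Fin 8) ≠ 0),
      Function.update_of_ne (by decide : (1:Fin 8) ≠ 0), hx1]
    ring
  rw [this, deriv_const]

lemma pd3_horizon (hx1 : x 1 = rs/2) : pd 3 (Ham rs c β) x = 0 := by
  unfold pd
  have : (fun s => Ham rs c β (Function.update x 3 s)) = fun _ => x 4 + Psiv rs c x := by
    funext s
    unfold Ham
    rw [update_psiv 3 (by decide) (by decide) (by decide),
      Function.update_of_ne (by decide : (4:Fin 8) ≠ 3),
      Function.update_of_ne (by decide : (1:Fin 8) ≠ 3), hx1]
    ring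
  rw [this, deriv_const]

lemma pd6_horizon (hx1 : x 1 = rs/2) : pd 6 (Ham rs c β) x = 0 := by
  unfold pd
  have : (fun s => Ham rs c β (Function.update x 6 s)) = fun _ => x 4 + Psiv rs c x := by
    funext s
    unfold Ham
    rw [update_psiv 6 (by decide) (by decide) (by decide),
      Function.update_of_ne (by decide : (4:Fin 8) ≠ 6),
      Function.update_of_ne (by decide : (1:Fin 8) ≠ 6), hx1]
    ring
  rw [this, deriv_const]

lemma pd2_horizon (hrs : 0 < rs) (hx1 : x 1 = rs/2) : pd 2 (Ham rs c β) x = 0 := by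
  unfold pd
  have : (fun s => Ham rs c β (Function.update x 2 s)) = fun _ => x 4 + c / rs * x 7 := by
    funext s
    unfold Ham
    rw [Function.update_of_ne (by decide : (4:Fin 8) ≠ 2),
      Function.update_of_ne (by decide : (1:Fin 8) ≠ 2), hx1,
      psiv_horizon hrs c (Function.update x 2 s)
        (by rw [Function.update_of_ne (by decide : (1:Fin 8) ≠ 2), hx1]),
      Function.update_of_ne (by decide : (7:Fin 8) ≠ 2)]
    ring
  rw [this, deriv_const]

lemma pd4_horizon (hx1 : x 1 = rs/2) : pd 4 (Ham rs c β) x = 1 := by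
  unfold pd
  have : (fun s => Ham rs c β (Function.update x 4 s)) = fun s => s + Psiv rs c x := by
    funext s
    unfold Ham
    rw [update_psiv 4 (by decide) (by decide) (by decide),
      Function.update_self,
      Function.update_of_ne (by decide : (1:Fin 8) ≠ 4), hx1]
    ring
  rw [this]
  simpa using ((hasDerivAt_id (x 4)).add_const (Psiv rs c x)).deriv

lemma pd7_horizon (hrs : 0 < rs) (hx1 : x 1 = rs/2) : pd 7 (Ham rs c β) x = c / rs := by
  unfold pd
  have : (fun s => Ham rs c β (Function.update x 7 s)) = fun s => x 4 + c / rs * s := by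
    funext s
    unfold Ham Psiv
    rw [Function.update_of_ne (by decide : (4:Fin 8) ≠ 7),
      Function.update_of_ne (by decide : (1:Fin 8) ≠ 7),
      Function.update_of_ne (by decide : (2:Fin 8) ≠ 7),
      Function.update_self, hx1, coeff_horizon hrs]
    ring
  rw [this]
  simpa using (((hasDerivAt_id (x 7)).const_mul (c/rs)).const_add (x 4)).deriv

lemma pd5_general (hβ : ContDiffOn ℝ 1 β chartU) (hx : x ∈ chartU) :
    pd 5 (Ham rs c β) x = (x 1 - rs/2) * fderiv ℝ β x (Pi.single 5 1) := by
  have hβd : DifferentiableAt ℝ β x :=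
    (hβ.differentiableOn one_ne_zero).differentiableAt (isOpen_chartU.mem_nhds hx)
  have hu : HasDerivAt (fun u => Function.update x 5 u) (Pi.single 5 1) (x 5) :=
    hasDerivAt_update x 5 (x 5)
  have hcomp : HasDerivAt (fun u => β (Function.update x 5 u))
      (fderiv ℝ β x (Pi.single 5 1)) (x 5) := by
    have hx5 : Function.update x 5 (x 5) = x := Function.update_eq_self 5 x
    have hβd' : HasFDerivAt β (fderiv ℝ β x) (Function.update x 5 (x 5)) := by
      rw [hx5]; exact hβd.hasFDerivAt
    exact hβd'.comp_hasDerivAt (x 5) hu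
  unfold pd
  have heq : (fun s => Ham rs c β (Function.update x 5 s)) =
      fun s => x 4 + Psiv rs c x + (x 1 - rs/2) * β (Function.update x 5 s) := by
    funext s
    unfold Ham
    rw [update_psiv 5 (by decide) (by decide) (by decide),
      Function.update_of_ne (by decide : (4:Fin 8) ≠ 5),
      Function.update_of_ne (by decide : (1:Fin 8) ≠ 5)]
  rw [heq]
  exact ((hcomp.const_mul (x 1 - rs/2)).const_add (x 4 + Psiv rs c x)).deriv

end pdlemmas

lemma eq_zero_of_gronwall {f g : ℝ → ℝ} {b : ℝ}
    (hg : ContinuousOn g (Set.Icc 0 b))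
    (hf : ∀ s ∈ Set.Icc 0 b, HasDerivAt f (f s * g s) s)
    (h0 : f 0 = 0) (hb : 0 ≤ b) : f b = 0 := by
  obtain ⟨K, hK⟩ := (isCompact_Icc).exists_bound_of_continuousOn hg
  have hcont : ContinuousOn f (Set.Icc 0 b) :=
    fun u hu => (hf u hu).continuousAt.continuousWithinAt
  have key := norm_le_gronwallBound_of_norm_deriv_right_le (f' := fun s => f s * g s)
    (δ := 0) (K := K) (ε := 0) hcont
    (fun u hu => (hf u (Set.Ico_subset_Icc_self hu)).hasDerivWithinAt)
    (by simp [h0])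
    (fun u hu => by
      have h1 : ‖g u‖ ≤ K := hK u (Set.Ico_subset_Icc_self hu)
      have h2 : ‖f u * g u‖ = ‖f u‖ * ‖g u‖ := by
        simp [abs_mul]
      rw [h2, add_zero, mul_comm K]
      exact mul_le_mul_of_nonneg_left h1 (norm_nonneg _))
  have hb2 := key b (Set.right_mem_Icc.2 hb)
  rw [gronwallBound_ε0_δ0] at hb2
  simpa using le_antisymm hb2 (norm_nonneg _)

lemma lin_of_deriv_const {I : Set ℝ} (hI : I.OrdConnected) (h0 : (0:ℝ) ∈ I)
    {f : ℝ → ℝ} {k : ℝ} (hf : ∀ u ∈ I, HasDerivAt f k u) :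
    ∀ s ∈ I, f s = f 0 + k * s := by
  have hg : ∀ u ∈ I, HasDerivAt (fun u => f u - k * u) 0 u := by
    intro u hu
    exact ((hf u hu).sub ((hasDerivAt_id u).const_mul k)).congr_deriv (by simp)
  intro s hs
  rcases le_total 0 s with h | h
  · have hsub : Set.Icc 0 s ⊆ I := hI.out h0 hs
    have := constant_of_has_deriv_right_zero
      (fun u hu => ((hg u (hsub hu)).continuousAt).continuousWithinAt)
      (fun u hu => ((hg u (hsub (Set.Ico_subset_Icc_self hu))).hasDerivWithinAt))
      s (Set.right_mem_Icc.2 h)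
    simp only [mul_zero, sub_zero] at this
    linarith [this]
  · have hsub : Set.Icc s 0 ⊆ I := hI.out hs h0
    have := constant_of_has_deriv_right_zero
      (fun u hu => ((hg u (hsub hu)).continuousAt).continuousWithinAt)
      (fun u hu => ((hg u (hsub (Set.Ico_subset_Icc_self hu))).hasDerivWithinAt))
      0 (Set.right_mem_Icc.2 h)
    simp only [mul_zero, sub_zero] at this
    linarith [this]

/-- a bicharacteristic curve of H = p_t + Ψ + (r − r_s/2)·β starting on the
extremal horizon stays on it, orbiting at constant angular velocity c/r_s with constant
t-speed 1, constant θ, p_t, p_θ, p_φ, and only p_r varying; if moreover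
p_t(0) + (c/r_s)·p_φ(0) = 0, the curve remains in the double characteristic manifold Σ₂. -/
theorem horizon_bicharacteristics
    (rs c : ℝ) (hrs : 0 < rs) (hc : 0 < c)
    (β : (Fin 8 → ℝ) → ℝ) (hβ : ContDiffOn ℝ 1 β chartU)
    (I : Set ℝ) (hI : I.OrdConnected) (h0 : (0 : ℝ) ∈ I)
    (γt γr γth γph γpt γpr γpth γpph : ℝ → ℝ)
    (X : ℝ → Fin 8 → ℝ)
    (hX : ∀ s, X s = ![γt s, γr s, γth s, γph s, γpt s, γpr s, γpth s, γpph s])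
    (hchart : ∀ s ∈ I, X s ∈ chartU)
    (ht : ∀ s ∈ I, HasDerivAt γt (pd 4 (Ham rs c β) (X s)) s)
    (hr : ∀ s ∈ I, HasDerivAt γr (pd 5 (Ham rs c β) (X s)) s)
    (hth : ∀ s ∈ I, HasDerivAt γth (pd 6 (Ham rs c β) (X s)) s)
    (hph : ∀ s ∈ I, HasDerivAt γph (pd 7 (Ham rs c β) (X s)) s)
    (hpt : ∀ s ∈ I, HasDerivAt γpt (-pd 0 (Ham rs c β) (X s)) s)
    (hpr : ∀ s ∈ I, HasDerivAt γpr (-pd 1 (Ham rs c β) (X s)) s)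
    (hpth : ∀ s ∈ I, HasDerivAt γpth (-pd 2 (Ham rs c β) (X s)) s)
    (hpph : ∀ s ∈ I, HasDerivAt γpph (-pd 3 (Ham rs c β) (X s)) s)
    (hr0 : γr 0 = rs / 2) :
    ∀ s ∈ I,
      γr s = rs / 2 ∧
      γth s = γth 0 ∧
      γt s = γt 0 + s ∧
      γph s = γph 0 + c / rs * s ∧
      γpt s = γpt 0 ∧
      γpth s = γpth 0 ∧
      γpph s = γpph 0 ∧
      (γpt 0 + c / rs * γpph 0 = 0 → γpt s + c / rs * γpph s = 0) := by
  have hX1 : ∀ s, X s 1 = γr s := fun s => by rw [hX]; rfl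
  -- continuity of X on I
  have hXcont : ContinuousOn X I := by
    rw [continuousOn_pi]
    intro i
    fin_cases i
    · have he : (fun s => X s 0) = γt := funext fun s => by rw [hX]; rfl
      exact he ▸ fun s hs => (ht s hs).continuousAt.continuousWithinAt
    · have he : (fun s => X s 1) = γr := funext fun s => by rw [hX]; rfl
      exact he ▸ fun s hs => (hr s hs).continuousAt.continuousWithinAt
    · have he : (fun s => X s 2) = γth := funext fun s => by rw [hX]; rfl
      exact he ▸ fun s hs => (hth s hs).continuousAt.continuousWithinAt
    · have he : (fun s => X s 3) = γph := funext fun s => by rw [hX]; rfl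
      exact he ▸ fun s hs => (hph s hs).continuousAt.continuousWithinAt
    · have he : (fun s => X s 4) = γpt := funext fun s => by rw [hX]; rfl
      exact he ▸ fun s hs => (hpt s hs).continuousAt.continuousWithinAt
    · have he : (fun s => X s 5) = γpr := funext fun s => by rw [hX]; rfl
      exact he ▸ fun s hs => (hpr s hs).continuousAt.continuousWithinAt
    · have he : (fun s => X s 6) = γpth := funext fun s => by rw [hX]; rfl
      exact he ▸ fun s hs => (hpth s hs).continuousAt.continuousWithinAt
    · have he : (fun s => X s 7) = γpph := funext fun s => by rw [hX]; rfl
      exact he ▸ fun s hs => (hpph s hs).continuousAt.continuousWithinAt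
  set g : ℝ → ℝ := fun s => fderiv ℝ β (X s) (Pi.single 5 1) with hgdef
  have hgcont : ContinuousOn g I := by
    have h1 : ContinuousOn (fderiv ℝ β) chartU :=
      hβ.continuousOn_fderiv_of_isOpen isOpen_chartU le_rfl
    have h2 : ContinuousOn (fun s => fderiv ℝ β (X s)) I := h1.comp hXcont hchart
    exact (ContinuousLinearMap.apply ℝ ℝ
      (Pi.single 5 1 : Fin 8 → ℝ)).continuous.comp_continuousOn h2
  have hfr : ∀ s ∈ I, HasDerivAt (fun u => γr u - rs/2) ((γr s - rs/2) * g s) s := by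
    intro s hs
    have h1 := hr s hs
    rw [pd5_general hβ (hchart s hs), hX1 s] at h1
    exact h1.sub_const _
  have hrr : ∀ s ∈ I, γr s = rs/2 := by
    intro s hs
    rcases le_total 0 s with h | h
    · have hsub : Set.Icc 0 s ⊆ I := hI.out h0 hs
      have := eq_zero_of_gronwall (f := fun u => γr u - rs/2) (g := g) (b := s)
        (hgcont.mono hsub) (fun u hu => hfr u (hsub hu)) (by simp [hr0]) h
      linarith
    · have hsub : Set.Icc s 0 ⊆ I := hI.out hs h0
      have hmap : ∀ u ∈ Set.Icc 0 (-s), -u ∈ I := by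
        intro u hu
        exact hsub ⟨by linarith [hu.2], by linarith [hu.1]⟩
      have hneg : ∀ u ∈ Set.Icc 0 (-s), HasDerivAt (fun u => γr (-u) - rs/2)
          ((γr (-u) - rs/2) * (-(g (-u)))) u := by
        intro u hu
        have h1 := (hfr (-u) (hmap u hu)).comp u (hasDerivAt_neg u)
        have h2 : (γr (-u) - rs/2) * g (-u) * (-1) =
            (γr (-u) - rs/2) * (-(g (-u))) := by ring
        rw [h2] at h1
        exact h1
      have hgc2 : ContinuousOn (fun u => -(g (-u))) (Set.Icc 0 (-s)) := by
        have : ContinuousOn (fun u => g (-u)) (Set.Icc 0 (-s)) :=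
          hgcont.comp continuous_neg.continuousOn hmap
        exact this.neg
      have := eq_zero_of_gronwall (f := fun u => γr (-u) - rs/2)
        (g := fun u => -(g (-u))) (b := -s) hgc2 hneg (by simp [hr0]) (by linarith)
      simp only [neg_neg] at this
      linarith
  have hXh : ∀ s ∈ I, X s 1 = rs/2 := fun s hs => by rw [hX1 s, hrr s hs]
  have Ht := lin_of_deriv_const hI h0 (f := γt) (k := 1) (fun u hu => by
    have h1 := ht u hu; rwa [pd4_horizon (hXh u hu)] at h1)
  have Hth := lin_of_deriv_const hI h0 (f := γth) (k := 0) (fun u hu => by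
    have h1 := hth u hu; rwa [pd6_horizon (hXh u hu)] at h1)
  have Hph := lin_of_deriv_const hI h0 (f := γph) (k := c/rs) (fun u hu => by
    have h1 := hph u hu; rwa [pd7_horizon hrs (hXh u hu)] at h1)
  have Hpt := lin_of_deriv_const hI h0 (f := γpt) (k := 0) (fun u hu => by
    have h1 := hpt u hu; rw [pd0_horizon (hXh u hu)] at h1; simpa using h1)
  have Hpth := lin_of_deriv_const hI h0 (f := γpth) (k := 0) (fun u hu => by
    have h1 := hpth u hu; rw [pd2_horizon hrs (hXh u hu)] at h1; simpa using h1)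
  have Hpph := lin_of_deriv_const hI h0 (f := γpph) (k := 0) (fun u hu => by
    have h1 := hpph u hu; rw [pd3_horizon (hXh u hu)] at h1; simpa using h1)
  intro s hs
  refine ⟨hrr s hs, by simpa using Hth s hs, by simpa using Ht s hs,
    Hph s hs, by simpa using Hpt s hs, by simpa using Hpth s hs,
    by simpa using Hpph s hs, ?_⟩
  intro hsum
  have e1 : γpt s = γpt 0 := by simpa using Hpt s hs
  have e2 : γpph s = γpph 0 := by simpa using Hpph s hs
  rw [e1, e2]; exact hsum
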